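/- Let c be a real number and let φ : ℝ → ℝ be a smooth function. For every natural number k, the k-th derivative at r = 0 of the function r ↦ r²·φ''(r) + (3 − c)·r·φ'(r) − 2c·φ(r) equals (k − c)(k + 2) times the k-th derivative of φ at 0. (This is the indicial identity showing that the linearization of the singular Yamabe equation determines ∂_r^k φ|_{r=0} with factor (k − n)(k + 2), so that the recursion is obstructed exactly at order k = n.) -/

import Mathlib

private lemma aux_indicial (a b : ℝ) (φ : ℝ → ℝ) (hφ : ContDiff ℝ (⊤ : ℕ∞) φ) (k : ℕ) :
    iteratedDeriv k
        (fun r : ℝ => r ^ 2 * deriv (deriv φ) r + a * r * deriv φ r + b * φ r) 0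
      = ((k : ℝ) * ((k : ℝ) - 1) + a * k + b) * iteratedDeriv k φ 0 := by
  induction k generalizing a b φ with
  | zero =>
    simp [iteratedDeriv_zero]
  | succ k ih =>
    have hφ' : ContDiff ℝ (⊤ : ℕ∞) (deriv φ) := (contDiff_infty_iff_deriv.mp hφ).2
    have hφ'' : ContDiff ℝ (⊤ : ℕ∞) (deriv (deriv φ)) :=
      (contDiff_infty_iff_deriv.mp hφ').2
    have hd1 : Differentiable ℝ φ := hφ.differentiable (by simp)
    have hd2 : Differentiable ℝ (deriv φ) := hφ'.differentiable (by simp)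
    have hd3 : Differentiable ℝ (deriv (deriv φ)) := hφ''.differentiable (by simp)
    have hderiv : deriv (fun r : ℝ => r ^ 2 * deriv (deriv φ) r + a * r * deriv φ r + b * φ r)
        = fun r : ℝ => r ^ 2 * deriv (deriv (deriv φ)) r + (a + 2) * r * deriv (deriv φ) r
            + (a + b) * deriv φ r := by
      funext r
      have h1 : HasDerivAt (fun r : ℝ => r ^ 2 * deriv (deriv φ) r)
          (2 * r ^ 1 * deriv (deriv φ) r + r ^ 2 * deriv (deriv (deriv φ)) r) r := by
        have := (hasDerivAt_pow 2 r).mul ((hd3 r).hasDerivAt)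
        exact this.congr_deriv (by norm_num)
      have h2 : HasDerivAt (fun r : ℝ => a * r * deriv φ r)
          (a * deriv φ r + a * r * deriv (deriv φ) r) r := by
        have := ((hasDerivAt_id r).const_mul a).mul ((hd2 r).hasDerivAt)
        exact this.congr_deriv (by simp only [id]; ring)
      have h3 : HasDerivAt (fun r : ℝ => b * φ r) (b * deriv φ r) r :=
        ((hd1 r).hasDerivAt).const_mul b
      have := ((h1.add h2).add h3).deriv
      refine this.trans ?_; ring
    rw [iteratedDeriv_succ', hderiv, ih (a + 2) (a + b) (deriv φ) hφ',
      ← iteratedDeriv_succ']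
    push_cast
    ring

/-- indicial identity for the linearized singular Yamabe operator:
the k-th derivative at 0 of `r ↦ r²φ'' + (3 − c)rφ' − 2cφ` is `(k − c)(k + 2) φ⁽ᵏ⁾(0)`. -/
theorem stmt0 (c : ℝ) (φ : ℝ → ℝ) (hφ : ContDiff ℝ (⊤ : ℕ∞) φ) (k : ℕ) :
    iteratedDeriv k
        (fun r : ℝ => r ^ 2 * deriv (deriv φ) r + (3 - c) * r * deriv φ r - 2 * c * φ r) 0
      = ((k : ℝ) - c) * ((k : ℝ) + 2) * iteratedDeriv k φ 0 := by
  have h := aux_indicial (3 - c) (-(2 * c)) φ hφ k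
  have heq : (fun r : ℝ => r ^ 2 * deriv (deriv φ) r + (3 - c) * r * deriv φ r - 2 * c * φ r)
      = (fun r : ℝ => r ^ 2 * deriv (deriv φ) r + (3 - c) * r * deriv φ r + -(2 * c) * φ r) := by
    funext r; ring
  rw [heq, h]; ring
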